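/- Let G be a group and n ≥ 2. Consider a finite directed graph with vertex set {1, …, n} and edges E₁, …, E_m, where edge E_i has origin o(i) and terminus t(i) with o(i) < t(i), and carries a label u_i ∈ G; assume the enumeration of edges satisfies: whenever t(i) = o(j), then i < j. Let F be the free group with basis v₁, …, v_n, and in the direct product G × F set g_i = (u_i, v_{o(i)} v_{t(i)}⁻¹) for i = 1, …, m. Then there exist indices i₁ < i₂ < … < i_k (k ≥ 1) with g_{i₁} g_{i₂} ⋯ g_{i_k} = (1_G, v₁ v_n⁻¹) in G × F if and only if there is a directed edge path E_{i₁}, E_{i₂}, …, E_{i_k} from vertex 1 to vertex n (i.e., o(i₁) = 1, t(i_k) = n, and t(i_j) = o(i_{j+1}) for all j) whose labels satisfy u_{i₁} u_{i₂} ⋯ u_{i_k} = 1 in G. -/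

import Mathlib

lemma my_reduce_eq_self {α : Type*} [DecidableEq α] {w : List (α × Bool)}
    (h : List.Chain' (fun p q : α × Bool => p.1 = q.1 → p.2 = q.2) w) :
    FreeGroup.reduce w = w := by
  induction w with
  | nil => rfl
  | cons x l ih =>
    have hl : FreeGroup.reduce l = l := ih h.tail
    rw [FreeGroup.reduce.cons, hl]
    cases l with
    | nil => rfl
    | cons y t =>
      have hxy := (List.isChain_cons_cons.1 h).1
      simp only []
      rw [if_neg]
      rintro ⟨h1, h2⟩
      have := hxy h1
      rw [this] at h2
      simp at h2

lemma my_mk_inj {α : Type*} [DecidableEq α] {w₁ w₂ : List (α × Bool)}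
    (h1 : List.Chain' (fun p q : α × Bool => p.1 = q.1 → p.2 = q.2) w₁)
    (h2 : List.Chain' (fun p q : α × Bool => p.1 = q.1 → p.2 = q.2) w₂)
    (h : FreeGroup.mk w₁ = FreeGroup.mk w₂) : w₁ = w₂ := by
  have := FreeGroup.reduce.sound h
  rwa [my_reduce_eq_self h1, my_reduce_eq_self h2] at this

lemma my_of_inv {α : Type*} (x y : α) :
    FreeGroup.of x * (FreeGroup.of y)⁻¹ = FreeGroup.mk [(x, true), (y, false)] := by
  rw [show FreeGroup.of x = FreeGroup.mk [(x, true)] from rfl,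
    show FreeGroup.of y = FreeGroup.mk [(y, true)] from rfl,
    FreeGroup.inv_mk, FreeGroup.mul_mk]
  rfl

lemma my_mk_app {α : Type*} (w : List (α × Bool)) (x : α) :
    FreeGroup.mk (w ++ [(x, false)]) = FreeGroup.mk w * (FreeGroup.of x)⁻¹ := by
  rw [show (FreeGroup.of x)⁻¹ = FreeGroup.mk [(x, false)] from by
    rw [show FreeGroup.of x = FreeGroup.mk [(x, true)] from rfl, FreeGroup.inv_mk]; rfl,
    FreeGroup.mul_mk]

lemma my_prod_ofFn_prod {G H : Type*} [Monoid G] [Monoid H] :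
    ∀ (k : ℕ) (f : Fin k → G) (g : Fin k → H),
    (List.ofFn fun j => ((f j, g j) : G × H)).prod = ((List.ofFn f).prod, (List.ofFn g).prod)
  | 0, f, g => by simp; rfl
  | (k+1), f, g => by
    simp [List.ofFn_succ, my_prod_ofFn_prod k (fun i => f i.succ) (fun i => g i.succ),
      Prod.mk_mul_mk]

lemma my_tele {n : ℕ} (a b : ℕ → Fin n) :
    ∀ k, 1 ≤ k → (∀ j, j + 1 < k → b j = a (j + 1)) →
      (List.ofFn fun j : Fin k => FreeGroup.of (a j) * (FreeGroup.of (b j))⁻¹).prod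
        = FreeGroup.of (a 0) * (FreeGroup.of (b (k - 1)))⁻¹
  | 0, hk, _ => by omega
  | 1, _, _ => by simp
  | (k+2), _, hm => by
    have ih := my_tele a b (k+1) (by omega) (fun j hj => hm j (by omega))
    rw [List.ofFn_succ', List.concat_eq_append, List.prod_append]
    have e1 : (List.ofFn fun j : Fin (k+1) =>
        FreeGroup.of (a j.castSucc) * (FreeGroup.of (b j.castSucc))⁻¹)
        = (List.ofFn fun j : Fin (k+1) => FreeGroup.of (a j) * (FreeGroup.of (b j))⁻¹) := rfl
    have e4 : a (((Fin.last (k+1)) : Fin (k+2)) : ℕ) = a (k+1) := by norm_num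
    have e5 : b (((Fin.last (k+1)) : Fin (k+2)) : ℕ) = b (k+1) := by norm_num
    rw [e1, ih, List.prod_cons, List.prod_nil, mul_one, e4, e5,
      show k + 1 - 1 = k from rfl, show k + 2 - 1 = k + 1 from rfl,
      show b k = a (k+1) from by simpa using hm k (by omega)]
    group

lemma my_main {n : ℕ} (a b : ℕ → Fin n) :
    ∀ k, 1 ≤ k → (∀ j, j < k → a j ≠ b j) →
      (∀ j l, j < k → l < k → b j = a l → j < l) →
      ∃ w' : List (Fin n × Bool),
        (List.ofFn fun j : Fin k => FreeGroup.of (a j) * (FreeGroup.of (b j))⁻¹).prod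
          = FreeGroup.mk (w' ++ [(b (k - 1), false)]) ∧
        List.Chain' (fun p q : Fin n × Bool => p.1 = q.1 → p.2 = q.2)
          (w' ++ [(b (k - 1), false)]) ∧
        (∀ p ∈ w', (p.2 = true → ∃ l < k, p.1 = a l) ∧ (p.2 = false → ∃ l < k, p.1 = b l)) ∧
        ((w' = [(a 0, true)] ∧ ∀ j, j + 1 < k → b j = a (j + 1)) ∨ 3 ≤ w'.length)
  | 0, hk, _, _ => by omega
  | 1, _, hne, _ => by
    refine ⟨[(a 0, true)], ?_, ?_, ?_, ?_⟩
    · simp [my_of_inv]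
    · simp only [List.cons_append, List.nil_append]
      refine List.isChain_cons_cons.2 ⟨fun h1 => absurd h1 (hne 0 (by omega)), List.isChain_singleton _⟩
    · rintro p hp
      simp only [List.mem_singleton] at hp
      subst hp
      exact ⟨fun _ => ⟨0, by omega, rfl⟩, fun h => by simp at h⟩
    · exact Or.inl ⟨rfl, fun j hj => by omega⟩
  | (k+2), _, hne, hord => by
    obtain ⟨w', hprod, hchain, hpn, hdisj⟩ :=
      my_main a b (k+1) (by omega) (fun j hj => hne j (by omega))
        (fun j l hj hl h => hord j l (by omega) (by omega) h)
    simp only [show k + 1 - 1 = k from rfl] at hprod hchain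
    simp only [show k + 2 - 1 = k + 1 from rfl]
    have e1 : (List.ofFn fun j : Fin (k+1) =>
          FreeGroup.of (a j.castSucc) * (FreeGroup.of (b j.castSucc))⁻¹)
        = (List.ofFn fun j : Fin (k+1) =>
          FreeGroup.of (a j) * (FreeGroup.of (b j))⁻¹) := rfl
    have hsplit : (List.ofFn fun j : Fin (k+2) =>
          FreeGroup.of (a j) * (FreeGroup.of (b j))⁻¹).prod
        = FreeGroup.mk (w' ++ [(b k, false)]) *
            (FreeGroup.of (a (k+1)) * (FreeGroup.of (b (k+1)))⁻¹) := by
      rw [List.ofFn_succ', List.concat_eq_append, List.prod_append, List.prod_cons,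
        List.prod_nil, mul_one, e1, hprod, Fin.val_last]
    replace hchain := List.isChain_append.1 hchain
    obtain ⟨hcw, -, hlastrel⟩ := hchain
    by_cases hmatch : b k = a (k+1)
    · refine ⟨w', ?_, ?_, ?_, ?_⟩
      · rw [hsplit, my_mk_app, my_mk_app, hmatch]
        group
      · apply List.isChain_append.2
        refine ⟨hcw, List.isChain_singleton _, ?_⟩
        intro x hx y hy
        simp only [List.head?_cons, Option.mem_some_iff] at hy
        subst hy
        obtain ⟨hne', rfl⟩ := List.mem_getLast?_eq_getLast hx
        have hxmem := List.getLast_mem hne'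
        intro hxy
        show (w'.getLast hne').2 = false
        rcases Bool.eq_false_or_eq_true (w'.getLast hne').2 with h2 | h2
        · obtain ⟨l, hl, hal⟩ := (hpn _ hxmem).1 h2
          have hba : b (k+1) = a l := (hal.symm.trans hxy).symm
          have := hord (k+1) l (by omega) (by omega) hba
          omega
        · exact h2
      · intro p hp
        exact ⟨fun h => (hpn p hp).1 h |>.imp fun l hl => ⟨by omega, hl.2⟩,
          fun h => (hpn p hp).2 h |>.imp fun l hl => ⟨by omega, hl.2⟩⟩
      · rcases hdisj with ⟨hw, hm⟩ | hlen
        · refine Or.inl ⟨hw, fun j hj => ?_⟩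
          rcases Nat.lt_or_ge (j+1) (k+1) with h | h
          · exact hm j h
          · have : j = k := by omega
            subst this
            exact hmatch
        · exact Or.inr hlen
    · refine ⟨w' ++ [(b k, false), (a (k+1), true)], ?_, ?_, ?_, ?_⟩
      · rw [hsplit, my_of_inv, FreeGroup.mul_mk]
        congr 1
        simp
      · have heq : w' ++ [(b k, false), (a (k+1), true)] ++ [(b (k+1), false)]
            = w' ++ [(b k, false), (a (k+1), true), (b (k+1), false)] := by simp
        rw [heq]; apply List.isChain_append.2
        refine ⟨hcw, ?_, ?_⟩
        · refine List.isChain_cons_cons.2 ⟨fun h => absurd h hmatch, ?_⟩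
          refine List.isChain_cons_cons.2 ⟨fun h => absurd h (hne (k+1) (by omega)), ?_⟩
          exact List.isChain_singleton _
        · intro x hx y hy
          simp only [List.head?_cons, Option.mem_some_iff] at hy
          subst hy
          exact hlastrel x hx (b k, false) (by simp)
      · intro p hp
        rcases List.mem_append.1 hp with hp | hp
        · exact ⟨fun h => (hpn p hp).1 h |>.imp fun l hl => ⟨by omega, hl.2⟩,
            fun h => (hpn p hp).2 h |>.imp fun l hl => ⟨by omega, hl.2⟩⟩
        · simp only [List.mem_cons, List.not_mem_nil, or_false] at hp
          rcases hp with rfl | rfl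
          · exact ⟨fun h => by simp at h, fun _ => ⟨k, by omega, rfl⟩⟩
          · exact ⟨fun _ => ⟨k+1, by omega, rfl⟩, fun h => by simp at h⟩
      · refine Or.inr ?_
        have : 1 ≤ w'.length := by
          rcases hdisj with ⟨hw, -⟩ | hlen
          · simp [hw]
          · omega
        simp only [List.length_append, List.length_cons, List.length_singleton]
        omega

/-- Reduction of the acyclic graph word problem to the subset sum problem in `G × F`.
The graph has vertex set `{1,…,n}` (modeled as `Fin n`) and edges `E₁,…,E_m` with
origins `o i`, termini `t i`, `o i < t i`, labels `u i ∈ G`, and the edge enumeration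
is compatible with paths: `t i = o j → i < j`. With `F = FreeGroup (Fin n)`,
`v_j = FreeGroup.of j`, and `g_i = (u_i, v_{o(i)} v_{t(i)}⁻¹)` in `G × F`, a subsequence
product of the `g_i` equals `(1, v₁ v_n⁻¹)` iff there is a directed edge path from
vertex `1` to vertex `n` whose labels multiply to `1` in `G`. -/
theorem agp_to_ssp_prod
    {G : Type*} [Group G] (n m : ℕ) (hn : 2 ≤ n)
    (o t : Fin m → Fin n) (hot : ∀ i, o i < t i)
    (henum : ∀ i j : Fin m, t i = o j → i < j)
    (u : Fin m → G) :
    (∃ (k : ℕ) (_ : 1 ≤ k) (idx : Fin k → Fin m), StrictMono idx ∧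
        (List.ofFn fun j =>
            ((u (idx j), FreeGroup.of (o (idx j)) * (FreeGroup.of (t (idx j)))⁻¹) :
              G × FreeGroup (Fin n))).prod =
          ((1, FreeGroup.of (⟨0, by omega⟩ : Fin n) *
              (FreeGroup.of (⟨n - 1, by omega⟩ : Fin n))⁻¹) : G × FreeGroup (Fin n))) ↔
    (∃ (k : ℕ) (hk : 1 ≤ k) (idx : Fin k → Fin m),
        o (idx ⟨0, by omega⟩) = (⟨0, by omega⟩ : Fin n) ∧
        t (idx ⟨k - 1, by omega⟩) = (⟨n - 1, by omega⟩ : Fin n) ∧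
        (∀ (j : ℕ) (hj : j + 1 < k), t (idx ⟨j, by omega⟩) = o (idx ⟨j + 1, hj⟩)) ∧
        (List.ofFn fun j => u (idx j)).prod = 1) := by
  constructor
  · rintro ⟨k, hk, idx, hmono, hprod⟩
    have hk0 : 0 < k := hk
    set a : ℕ → Fin n := fun j => o (idx ⟨j % k, Nat.mod_lt _ hk0⟩) with ha
    set b : ℕ → Fin n := fun j => t (idx ⟨j % k, Nat.mod_lt _ hk0⟩) with hb
    have haj : ∀ (j : ℕ) (hj : j < k), a j = o (idx ⟨j, hj⟩) :=
      fun j hj => congrArg (fun z => o (idx z)) (Fin.ext (Nat.mod_eq_of_lt hj))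
    have hbj : ∀ (j : ℕ) (hj : j < k), b j = t (idx ⟨j, hj⟩) :=
      fun j hj => congrArg (fun z => t (idx z)) (Fin.ext (Nat.mod_eq_of_lt hj))
    rw [my_prod_ofFn_prod, Prod.mk.injEq] at hprod
    obtain ⟨hfst, hsnd⟩ := hprod
    have hlist : (List.ofFn fun j : Fin k =>
          FreeGroup.of (o (idx j)) * (FreeGroup.of (t (idx j)))⁻¹)
        = (List.ofFn fun j : Fin k =>
          FreeGroup.of (a (j : ℕ)) * (FreeGroup.of (b (j : ℕ)))⁻¹) := by
      refine congrArg List.ofFn (funext fun j => ?_)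
      rw [haj _ j.isLt, hbj _ j.isLt, Fin.eta]
    rw [hlist] at hsnd
    obtain ⟨w', hprodF, hchain, hpn, hdisj⟩ := my_main a b k hk
      (fun j hj => (hot _).ne)
      (fun j l hj hl h => by
        have h1 := henum _ _ h
        have h2 := hmono.lt_iff_lt.1 h1
        simpa [Fin.lt_def, Nat.mod_eq_of_lt hj, Nat.mod_eq_of_lt hl] using h2)
    rw [hprodF, my_of_inv] at hsnd
    have hred2 : List.Chain' (fun p q : Fin n × Bool => p.1 = q.1 → p.2 = q.2)
        [((⟨0, by omega⟩ : Fin n), true), ((⟨n - 1, by omega⟩ : Fin n), false)] := by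
      refine List.isChain_cons_cons.2 ⟨fun h => ?_, List.isChain_singleton _⟩
      have h' : (0 : ℕ) = n - 1 := congrArg Fin.val h
      omega
    have heq := my_mk_inj hchain hred2 hsnd
    have hw1 : w' = [(a 0, true)] ∧ ∀ j, j + 1 < k → b j = a (j + 1) := by
      rcases hdisj with h | hlen
      · exact h
      · exfalso
        have := congrArg List.length heq
        simp only [List.length_append, List.length_cons, List.length_nil] at this
        omega
    obtain ⟨hw', hm⟩ := hw1
    rw [hw'] at heq
    simp only [List.cons_append, List.nil_append, List.cons.injEq, Prod.mk.injEq] at heq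
    obtain ⟨⟨ha0, -⟩, ⟨hbk, -⟩, -⟩ := heq
    refine ⟨k, hk, idx, ?_, ?_, ?_, hfst⟩
    · rw [← haj 0 (by omega)]; exact ha0
    · rw [← hbj (k-1) (by omega)]; exact hbk
    · intro j hj
      rw [← haj (j+1) hj, ← hbj j (by omega)]
      exact hm j hj
  · rintro ⟨k, hk, idx, h1, h2, h3, h4⟩
    have hk0 : 0 < k := hk
    have step : ∀ (j : ℕ) (hj : j + 1 < k), idx ⟨j, by omega⟩ < idx ⟨j+1, hj⟩ :=
      fun j hj => henum _ _ (h3 j hj)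
    have key : ∀ (q : ℕ) (hq : q < k) (p : ℕ) (hp : p < q), idx ⟨p, by omega⟩ < idx ⟨q, hq⟩ := by
      intro q
      induction q with
      | zero => intro hq p hp; omega
      | succ q ih =>
        intro hq p hp
        rcases Nat.lt_or_ge p q with h | h
        · exact lt_trans (ih (by omega) p h) (step q hq)
        · have : p = q := by omega
          subst this
          exact step p hq
    have hmono : StrictMono idx := by
      intro i j hij
      have := key j.val j.isLt i.val hij
      simpa [Fin.eta] using this
    set a : ℕ → Fin n := fun j => o (idx ⟨j % k, Nat.mod_lt _ hk0⟩) with ha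
    set b : ℕ → Fin n := fun j => t (idx ⟨j % k, Nat.mod_lt _ hk0⟩) with hb
    have haj : ∀ (j : ℕ) (hj : j < k), a j = o (idx ⟨j, hj⟩) :=
      fun j hj => congrArg (fun z => o (idx z)) (Fin.ext (Nat.mod_eq_of_lt hj))
    have hbj : ∀ (j : ℕ) (hj : j < k), b j = t (idx ⟨j, hj⟩) :=
      fun j hj => congrArg (fun z => t (idx z)) (Fin.ext (Nat.mod_eq_of_lt hj))
    refine ⟨k, hk, idx, hmono, ?_⟩
    rw [my_prod_ofFn_prod, Prod.mk.injEq]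
    refine ⟨h4, ?_⟩
    have hlist : (List.ofFn fun j : Fin k =>
          FreeGroup.of (o (idx j)) * (FreeGroup.of (t (idx j)))⁻¹)
        = (List.ofFn fun j : Fin k =>
          FreeGroup.of (a (j : ℕ)) * (FreeGroup.of (b (j : ℕ)))⁻¹) := by
      refine congrArg List.ofFn (funext fun j => ?_)
      rw [haj _ j.isLt, hbj _ j.isLt, Fin.eta]
    rw [hlist, my_tele a b k hk (fun j hj => by
      rw [haj (j+1) hj, hbj j (by omega)]
      exact h3 j hj)]
    rw [haj 0 (by omega), hbj (k-1) (by omega), h1, h2]
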